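/- For 0 < a < c, the function x ↦ (1 - exp(-c·x))/(1 - exp(-a·x)) is strictly decreasing on (0, ∞). -/
import Mathlib


open Real

lemma slope_exp_lt (s t : ℝ) (hs : 0 < s) (hst : s < t) :
    t * (Real.exp s - 1) < s * (Real.exp t - 1) := by
  have h := strictConvexOn_exp.secant_strict_mono (a := 0) (x := s) (y := t)
    (Set.mem_univ _) (Set.mem_univ _) (Set.mem_univ _) hs.ne' (hs.trans hst).ne' hst
  simp only [Real.exp_zero, sub_zero] at h
  rw [div_lt_div_iff₀ hs (hs.trans hst)] at h
  linarith

theorem ratio_strict_anti (a c : ℝ) (ha : 0 < a) (hac : a < c) :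
    StrictAntiOn (fun x : ℝ => (1 - Real.exp (-(c * x))) / (1 - Real.exp (-(a * x))))
      (Set.Ioi 0) := by
  have hc : 0 < c := ha.trans hac
  have hint : interior (Set.Ioi (0:ℝ)) = Set.Ioi 0 := interior_Ioi
  set f' : ℝ → ℝ := fun x =>
    ((c * Real.exp (-(c * x))) * (1 - Real.exp (-(a * x)))
      - (1 - Real.exp (-(c * x))) * (a * Real.exp (-(a * x))))
      / (1 - Real.exp (-(a * x)))^2 with hf'def
  have hden : ∀ x : ℝ, x ∈ Set.Ioi (0:ℝ) → 1 - Real.exp (-(a * x)) ≠ 0 := by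
    intro x hx
    have : Real.exp (-(a * x)) < 1 := by
      rw [Real.exp_lt_one_iff]
      have : 0 < a * x := mul_pos ha hx
      linarith
    linarith
  apply strictAntiOn_of_hasDerivWithinAt_neg (f' := f') (convex_Ioi 0)
  · apply ContinuousOn.div
    · fun_prop
    · fun_prop
    · exact hden
  · intro x hx
    rw [hint] at hx
    have h1 : HasDerivAt (fun x : ℝ => 1 - Real.exp (-(c * x))) (c * Real.exp (-(c * x))) x := by
      have := ((Real.hasDerivAt_exp (-(c*x))).comp x ((hasDerivAt_id x).const_mul c).neg)
      simpa [mul_comm] using (this.const_sub 1)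
    have h2 : HasDerivAt (fun x : ℝ => 1 - Real.exp (-(a * x))) (a * Real.exp (-(a * x))) x := by
      have := ((Real.hasDerivAt_exp (-(a*x))).comp x ((hasDerivAt_id x).const_mul a).neg)
      simpa [mul_comm] using (this.const_sub 1)
    have := h1.div h2 (hden x hx)
    rw [hint]
    exact (this.hasDerivWithinAt).congr_deriv (by rw [hf'def])
  · intro x hx
    rw [hint] at hx
    have hx0 : (0:ℝ) < x := hx
    have key := slope_exp_lt (a*x) (c*x) (mul_pos ha hx0)
      (by exact mul_lt_mul_of_pos_right hac hx0)
    -- numerator negative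
    have hnum : (c * Real.exp (-(c * x))) * (1 - Real.exp (-(a * x)))
        - (1 - Real.exp (-(c * x))) * (a * Real.exp (-(a * x))) < 0 := by
      have e1 : Real.exp (-(c*x)) * Real.exp (a*x) = Real.exp (-(c*x)) * Real.exp (a*x) := rfl
      have hec : Real.exp (-(c*x)) = (Real.exp (c*x))⁻¹ := by rw [Real.exp_neg]
      have hea : Real.exp (-(a*x)) = (Real.exp (a*x))⁻¹ := by rw [Real.exp_neg]
      have hpc : 0 < Real.exp (c*x) := Real.exp_pos _
      have hpa : 0 < Real.exp (a*x) := Real.exp_pos _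
      have key2 : c * (Real.exp (a*x) - 1) < a * (Real.exp (c*x) - 1) :=
        lt_of_mul_lt_mul_left (by nlinarith [key]) hx0.le
      have hAB : 0 < Real.exp (a*x) * Real.exp (c*x) := mul_pos hpa hpc
      have hA1 : (Real.exp (a*x))⁻¹ * Real.exp (a*x) = 1 := inv_mul_cancel₀ hpa.ne'
      have hB1 : (Real.exp (c*x))⁻¹ * Real.exp (c*x) = 1 := inv_mul_cancel₀ hpc.ne'
      rw [hec, hea, sub_neg]
      calc c * (Real.exp (c*x))⁻¹ * (1 - (Real.exp (a*x))⁻¹)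
          = c * (Real.exp (a*x) - 1) / (Real.exp (a*x) * Real.exp (c*x)) := by
            linear_combination (-(c * (Real.exp (c*x))⁻¹)) * hA1
        _ < a * (Real.exp (c*x) - 1) / (Real.exp (a*x) * Real.exp (c*x)) := by
            gcongr
        _ = (1 - (Real.exp (c*x))⁻¹) * (a * (Real.exp (a*x))⁻¹) := by
            linear_combination a * (Real.exp (a*x))⁻¹ * hB1
    have hd2 : 0 < (1 - Real.exp (-(a * x)))^2 := by
      have := hden x hx
      positivity
    exact div_neg_of_neg_of_pos hnum hd2
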